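/- arXiv:math/0610763 — 2 statements merged into one kernel-verified Lean document; each statement's English description precedes it below -/
import Mathlib

section
/- Let (S_n)_{n∈ℕ} be a symmetric, square integrable random walk in ℤ² starting at 0. Then the series ∑_{n=0}^{∞} P[S_n = 0] diverges, i.e., ∑_{n=0}^{∞} P[S_n = 0] = +∞. -/
open MeasureTheory ProbabilityTheory Filter

set_option maxHeartbeats 1000000

section Aux
variable {Ω : Type*} [MeasurableSpace Ω] {μ : Measure Ω} [IsProbabilityMeasure μ]

private lemma identDistrib_add' {f g f' g' : Ω → ℤ × ℤ}
    (hf : Measurable f) (hg : Measurable g) (hf' : Measurable f') (hg' : Measurable g')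
    (hfg : IndepFun f g μ) (hfg' : IndepFun f' g' μ)
    (h1 : IdentDistrib f f' μ μ) (h2 : IdentDistrib g g' μ μ) :
    IdentDistrib (fun ω => f ω + g ω) (fun ω => f' ω + g' ω) μ μ := by
  refine ⟨(hf.add hg).aemeasurable, (hf'.add hg').aemeasurable, ?_⟩
  have e1 : (fun ω => f ω + g ω) = (fun p : (ℤ×ℤ) × (ℤ×ℤ) => p.1 + p.2) ∘ (fun ω => (f ω, g ω)) := rfl
  have e2 : (fun ω => f' ω + g' ω) = (fun p : (ℤ×ℤ) × (ℤ×ℤ) => p.1 + p.2) ∘ (fun ω => (f' ω, g' ω)) := rfl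
  rw [e1, e2, ← Measure.map_map measurable_add (hf.prodMk hg),
    ← Measure.map_map measurable_add (hf'.prodMk hg'),
    (indepFun_iff_map_prod_eq_prod_map_map hf.aemeasurable hg.aemeasurable).1 hfg,
    (indepFun_iff_map_prod_eq_prod_map_map hf'.aemeasurable hg'.aemeasurable).1 hfg',
    h1.map_eq, h2.map_eq]

private lemma identDistrib_sum' {X Z : ℕ → Ω → ℤ × ℤ}
    (hXm : ∀ k, Measurable (X k)) (hZm : ∀ k, Measurable (Z k))
    (hid : ∀ k, IdentDistrib (X k) (Z k) μ μ)
    (hXind : ∀ n, IndepFun (fun ω => ∑ k ∈ Finset.range n, X k ω) (X n) μ)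
    (hZind : ∀ n, IndepFun (fun ω => ∑ k ∈ Finset.range n, Z k ω) (Z n) μ) :
    ∀ n, IdentDistrib (fun ω => ∑ k ∈ Finset.range n, X k ω)
      (fun ω => ∑ k ∈ Finset.range n, Z k ω) μ μ := by
  intro n
  induction n with
  | zero => simp only [Finset.range_zero, Finset.sum_empty]
            exact IdentDistrib.refl aemeasurable_const
  | succ n ih =>
      simp only [Finset.sum_range_succ]
      exact identDistrib_add' (by fun_prop) (hXm n) (by fun_prop) (hZm n)
        (hXind n) (hZind n) ih (hid n)

end Aux

/-- For a symmetric, square integrable random walk in ℤ² starting at 0,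
the series ∑ₙ P[Sₙ = 0] diverges. -/
theorem sum_prob_return_eq_top
    {Ω : Type*} [MeasurableSpace Ω] (μ : Measure Ω) [IsProbabilityMeasure μ]
    (X : ℕ → Ω → ℤ × ℤ)
    (hmeas : ∀ n, Measurable (X n))
    (hindep : iIndepFun X μ)
    (hident : ∀ n, IdentDistrib (X n) (X 0) μ μ)
    (hsq : Integrable (fun ω => ((X 0 ω).1 : ℝ) ^ 2 + ((X 0 ω).2 : ℝ) ^ 2) μ)
    (hsymm : Measure.map (X 0) μ = Measure.map (fun ω => -(X 0 ω)) μ)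
    (S : ℕ → Ω → ℤ × ℤ)
    (hS : ∀ n ω, S n ω = ∑ k ∈ Finset.range n, X k ω) :
    ∑' n : ℕ, μ {ω | S n ω = 0} = ⊤ := by
  classical
  have hSeq : ∀ n, S n = fun ω => ∑ k ∈ Finset.range n, X k ω := fun n => funext (hS n)
  set T : ℕ → Ω → ℤ × ℤ := fun n ω => ∑ k ∈ Finset.range n, X (n + k) ω with hT
  have hSmeas : ∀ n, Measurable (S n) := by
    intro n; rw [hSeq]; exact Finset.measurable_sum _ fun k _ => hmeas k
  have hTmeas : ∀ n, Measurable (T n) := by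
    intro n; exact Finset.measurable_sum _ fun k _ => hmeas (n + k)
  -- independence of shifted partial sums from the next increment
  have hindXshift : ∀ m n : ℕ,
      IndepFun (fun ω => ∑ k ∈ Finset.range n, X (m + k) ω) (X (m + n)) μ := by
    intro m n
    have he : (fun ω => ∑ k ∈ Finset.range n, X (m + k) ω)
        = ∑ j ∈ (Finset.range n).image (m + ·), X j := by
      funext ω
      rw [Finset.sum_apply (a := ω), Finset.sum_image (fun a _ b _ h => by omega)]
    rw [he]
    exact hindep.indepFun_finsetSum_of_notMem hmeas (by simp)
  have hind0 : ∀ n, IndepFun (fun ω => ∑ k ∈ Finset.range n, X k ω) (X n) μ := by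
    intro n; simpa using hindXshift 0 n
  have hident' : ∀ i j, IdentDistrib (X i) (X j) μ μ :=
    fun i j => (hident i).trans (hident j).symm
  -- T n has the same distribution as S n
  have hTid : ∀ n, IdentDistrib (T n) (S n) μ μ := by
    intro n
    rw [hSeq]
    exact identDistrib_sum' (fun k => hmeas (n + k)) hmeas
      (fun k => hident' (n + k) k) (hindXshift n) hind0 n
  -- S n is symmetric
  have hnegid : ∀ n, IdentDistrib (S n) (fun ω => -(S n ω)) μ μ := by
    intro n
    set Z : ℕ → Ω → ℤ × ℤ := fun k ω => -(X k ω) with hZ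
    have hZm : ∀ k, Measurable (Z k) := fun k => (hmeas k).neg
    have h0 : IdentDistrib (X 0) (Z 0) μ μ :=
      ⟨(hmeas 0).aemeasurable, (hZm 0).aemeasurable, hsymm⟩
    have hidZ : ∀ k, IdentDistrib (X k) (Z k) μ μ := by
      intro k
      have hk : IdentDistrib (Z k) (Z 0) μ μ := (hident k).comp measurable_neg
      exact (hident k).trans (h0.trans hk.symm)
    have hZind : ∀ m, IndepFun (fun ω => ∑ k ∈ Finset.range m, Z k ω) (Z m) μ := by
      intro m
      have : (fun ω => ∑ k ∈ Finset.range m, Z k ω)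
          = fun ω => -(∑ k ∈ Finset.range m, X k ω) := by
        funext ω; simp [hZ]
      rw [this]
      exact (hind0 m).comp measurable_neg measurable_neg
    have h := identDistrib_sum' hmeas hZm hidZ hind0 hZind n
    rw [hSeq]
    convert h using 1
    funext ω; simp [hZ]
  -- key identity on point masses
  have hpoint : ∀ n (x : ℤ × ℤ), μ (T n ⁻¹' {-x}) = μ (S n ⁻¹' {x}) := by
    intro n x
    have h1 : μ (T n ⁻¹' {-x}) = μ (S n ⁻¹' {-x}) :=
      (hTid n).measure_mem_eq (measurableSet_singleton _)
    have h2 : μ (S n ⁻¹' {-x}) = μ ((fun ω => -(S n ω)) ⁻¹' {-x}) :=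
      (hnegid n).measure_mem_eq (measurableSet_singleton _)
    have h3 : (fun ω => -(S n ω)) ⁻¹' {-x} = S n ⁻¹' {x} := by
      ext ω; simp
    rw [h1, h2, h3]
  -- independence of the two halves
  have hindST : ∀ n, IndepFun (S n) (T n) μ := by
    intro n
    set s₁ : Finset ℕ := Finset.range n
    set s₂ : Finset ℕ := (Finset.range n).image (n + ·)
    have hdisj : Disjoint s₁ s₂ := by
      simp only [Finset.disjoint_left, s₁, s₂]
      intro a ha hb
      simp only [Finset.mem_range] at ha
      simp only [Finset.mem_image, Finset.mem_range] at hb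
      omega
    have h := hindep.indepFun_finset s₁ s₂ hdisj hmeas
    have hφ : ∀ s : Finset ℕ, Measurable (fun v : (i : s) → ℤ × ℤ => ∑ i, v i) :=
      fun s => Finset.measurable_sum _ fun i _ => measurable_pi_apply i
    have h2 := h.comp (hφ s₁) (hφ s₂)
    have e1 : (fun a => ∑ i : s₁, X i a) = S n := by
      funext a
      rw [hSeq]
      exact Finset.sum_coe_sort s₁ (fun j => X j a)
    have e2 : (fun a => ∑ i : s₂, X i a) = T n := by
      funext a
      rw [hT]
      show ∑ i : s₂, X i a = ∑ k ∈ Finset.range n, X (n + k) a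
      rw [Finset.sum_coe_sort s₂ (fun j => X j a)]
      exact Finset.sum_image (fun a _ b _ h => by simpa using h)
    rw [← e1, ← e2]
    exact h2
  -- decomposition inequality
  have hSplit : ∀ n ω, S (2 * n) ω = S n ω + T n ω := by
    intro n ω
    rw [hS, hS, hT, two_mul, Finset.sum_range_add]
  have hdecomp : ∀ n (B : Finset (ℤ × ℤ)),
      ∑ x ∈ B, μ (S n ⁻¹' {x}) * μ (S n ⁻¹' {x}) ≤ μ {ω | S (2 * n) ω = 0} := by
    intro n B
    have hprod : ∀ x : ℤ × ℤ,
        μ (S n ⁻¹' {x} ∩ T n ⁻¹' {-x}) = μ (S n ⁻¹' {x}) * μ (T n ⁻¹' {-x}) :=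
      fun x => (indepFun_iff_measure_inter_preimage_eq_mul.1 (hindST n)) {x} {-x}
        (measurableSet_singleton _) (measurableSet_singleton _)
    calc ∑ x ∈ B, μ (S n ⁻¹' {x}) * μ (S n ⁻¹' {x})
        = ∑ x ∈ B, μ (S n ⁻¹' {x} ∩ T n ⁻¹' {-x}) := by
          refine Finset.sum_congr rfl fun x _ => ?_
          rw [hprod x, hpoint n x]
      _ = μ (⋃ x ∈ B, S n ⁻¹' {x} ∩ T n ⁻¹' {-x}) := by
          refine (measure_biUnion_finset ?_ ?_).symm
          · intro x _ y _ hxy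
            refine Set.disjoint_left.2 fun ω hx hy => hxy ?_
            have h1 : S n ω = x := hx.1
            have h2 : S n ω = y := hy.1
            rw [← h1, h2]
          · exact fun x _ => ((hSmeas n) (measurableSet_singleton _)).inter
              ((hTmeas n) (measurableSet_singleton _))
      _ ≤ μ {ω | S (2 * n) ω = 0} := by
          refine measure_mono ?_
          intro ω hω
          simp only [Set.mem_iUnion] at hω
          obtain ⟨x, _, hx1, hx2⟩ := hω
          have : S n ω = x := hx1
          have h2 : T n ω = -x := hx2
          simp only [Set.mem_setOf_eq, hSplit n ω, this, h2, add_neg_cancel]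
  -- second moment bound and Chebyshev: mass 1/2 lives on a ball of radius ~√n
  obtain ⟨D, hD, hhalf⟩ : ∃ D : ℝ, 0 < D ∧ ∀ n : ℕ, 1 ≤ n → ∃ B : Finset (ℤ × ℤ),
      (B.card : ℝ) ≤ D * n ∧ 1 / 2 ≤ ∑ x ∈ B, (μ (S n ⁻¹' {x})).toReal := by
    set Y : ℕ → Ω → ℝ := fun k ω => ((X k ω).1 : ℝ) with hY
    set W : ℕ → Ω → ℝ := fun k ω => ((X k ω).2 : ℝ) with hW
    have hYm : ∀ k, Measurable (Y k) :=
      fun k => (measurable_of_countable (fun p : ℤ × ℤ => (p.1 : ℝ))).comp (hmeas k)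
    have hWm : ∀ k, Measurable (W k) :=
      fun k => (measurable_of_countable (fun p : ℤ × ℤ => (p.2 : ℝ))).comp (hmeas k)
    have hY2 : Integrable (fun ω => Y 0 ω ^ 2) μ := by
      refine hsq.mono ((hYm 0).pow_const 2).aestronglyMeasurable (ae_of_all _ fun ω => ?_)
      rw [Real.norm_eq_abs, Real.norm_eq_abs, abs_of_nonneg (by positivity),
        abs_of_nonneg (by positivity)]
      nlinarith [sq_nonneg (W 0 ω)]
    have hW2 : Integrable (fun ω => W 0 ω ^ 2) μ := by
      refine hsq.mono ((hWm 0).pow_const 2).aestronglyMeasurable (ae_of_all _ fun ω => ?_)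
      rw [Real.norm_eq_abs, Real.norm_eq_abs, abs_of_nonneg (by positivity),
        abs_of_nonneg (by positivity)]
      nlinarith [sq_nonneg (Y 0 ω)]
    have hYL2 : MemLp (Y 0) 2 μ := (memLp_two_iff_integrable_sq (hYm 0).aestronglyMeasurable).2 hY2
    have hWL2 : MemLp (W 0) 2 μ := (memLp_two_iff_integrable_sq (hWm 0).aestronglyMeasurable).2 hW2
    have hidY : ∀ k, IdentDistrib (Y k) (Y 0) μ μ :=
      fun k => (hident k).comp (measurable_of_countable (fun p : ℤ × ℤ => (p.1 : ℝ)))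
    have hidW : ∀ k, IdentDistrib (W k) (W 0) μ μ :=
      fun k => (hident k).comp (measurable_of_countable (fun p : ℤ × ℤ => (p.2 : ℝ)))
    have hYL2k : ∀ k, MemLp (Y k) 2 μ := fun k => (hidY k).symm.memLp_snd hYL2
    have hWL2k : ∀ k, MemLp (W k) 2 μ := fun k => (hidW k).symm.memLp_snd hWL2
    -- mean zero
    have hXneg : IdentDistrib (X 0) (fun ω => -(X 0 ω)) μ μ :=
      ⟨(hmeas 0).aemeasurable, (hmeas 0).neg.aemeasurable, hsymm⟩
    have hEY : ∫ ω, Y 0 ω ∂μ = 0 := by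
      have h1 : IdentDistrib (Y 0) (fun ω => -(Y 0 ω)) μ μ := by
        have h2 := hXneg.comp (u := fun p : ℤ × ℤ => (p.1 : ℝ)) (measurable_of_countable _)
        have e1 : ((fun p : ℤ × ℤ => (p.1 : ℝ)) ∘ X 0) = Y 0 := rfl
        have e2 : ((fun p : ℤ × ℤ => (p.1 : ℝ)) ∘ fun ω => -X 0 ω) = fun ω => -(Y 0 ω) := by
          funext ω; simp [hY]
        rw [e1, e2] at h2; exact h2
      have h := h1.integral_eq
      rw [integral_neg] at h; linarith
    have hEW : ∫ ω, W 0 ω ∂μ = 0 := by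
      have h1 : IdentDistrib (W 0) (fun ω => -(W 0 ω)) μ μ := by
        have h2 := hXneg.comp (u := fun p : ℤ × ℤ => (p.2 : ℝ)) (measurable_of_countable _)
        have e1 : ((fun p : ℤ × ℤ => (p.2 : ℝ)) ∘ X 0) = W 0 := rfl
        have e2 : ((fun p : ℤ × ℤ => (p.2 : ℝ)) ∘ fun ω => -X 0 ω) = fun ω => -(W 0 ω) := by
          funext ω; simp [hW]
        rw [e1, e2] at h2; exact h2
      have h := h1.integral_eq
      rw [integral_neg] at h; linarith
    -- second moment of partial sums
    have hsqsum : ∀ (Z : ℕ → Ω → ℝ), (∀ k, Measurable (Z k)) →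
        (∀ k, IdentDistrib (Z k) (Z 0) μ μ) → (∀ k, MemLp (Z k) 2 μ) →
        (∫ ω, Z 0 ω ∂μ = 0) →
        (∀ i j, i ≠ j → IndepFun (Z i) (Z j) μ) →
        ∀ n : ℕ, μ[(∑ k ∈ Finset.range n, Z k) ^ 2]
          = n * ∫ ω, Z 0 ω ^ 2 ∂μ := by
      intro Z hZm hidZ hZL2 hEZ hindZ n
      have hsumL2 : MemLp (∑ k ∈ Finset.range n, Z k) 2 μ :=
        memLp_finsetSum' _ fun k _ => hZL2 k
      have hvd := variance_eq_sub hsumL2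
      have hvs : variance (∑ k ∈ Finset.range n, Z k) μ = n * variance (Z 0) μ := by
        rw [IndepFun.variance_sum (fun i _ => hZL2 i)
          (fun i _ j _ hij => hindZ i j hij)]
        rw [Finset.sum_congr rfl fun k _ => (hidZ k).variance_eq,
          Finset.sum_const, Finset.card_range, nsmul_eq_mul]
      have hEsum : μ[∑ k ∈ Finset.range n, Z k] = 0 := by
        have : (∑ k ∈ Finset.range n, Z k) = fun ω => ∑ k ∈ Finset.range n, Z k ω := by
          funext ω; simp
        rw [this, integral_finset_sum _ fun k _ => (hZL2 k).integrable one_le_two]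
        rw [Finset.sum_congr rfl fun k _ => ((hidZ k).integral_eq.trans hEZ)]
        simp
      have hvz : variance (Z 0) μ = ∫ ω, Z 0 ω ^ 2 ∂μ := by
        rw [variance_eq_sub (hZL2 0), hEZ]
        simp only [Pi.pow_apply]
        ring
      rw [hvs, hEsum, hvz] at hvd
      norm_num at hvd
      simp only [Pi.pow_apply, Finset.sum_apply]
      linarith [hvd]
    have hEY2 : ∀ n : ℕ, μ[(∑ k ∈ Finset.range n, Y k) ^ 2] = n * ∫ ω, Y 0 ω ^ 2 ∂μ :=
      hsqsum Y hYm hidY hYL2k hEY fun i j hij =>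
        (hindep.indepFun hij).comp (measurable_of_countable (fun p : ℤ × ℤ => (p.1 : ℝ)))
          (measurable_of_countable (fun p : ℤ × ℤ => (p.1 : ℝ)))
    have hEW2 : ∀ n : ℕ, μ[(∑ k ∈ Finset.range n, W k) ^ 2] = n * ∫ ω, W 0 ω ^ 2 ∂μ :=
      hsqsum W hWm hidW hWL2k hEW fun i j hij =>
        (hindep.indepFun hij).comp (measurable_of_countable (fun p : ℤ × ℤ => (p.2 : ℝ)))
          (measurable_of_countable (fun p : ℤ × ℤ => (p.2 : ℝ)))
    -- the second moment function
    set EK : ℝ := (∫ ω, Y 0 ω ^ 2 ∂μ) + ∫ ω, W 0 ω ^ 2 ∂μ with hEK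
    have hEKnn : 0 ≤ EK := by
      have h1 : 0 ≤ ∫ ω, Y 0 ω ^ 2 ∂μ := integral_nonneg fun ω => by positivity
      have h2 : 0 ≤ ∫ ω, W 0 ω ^ 2 ∂μ := integral_nonneg fun ω => by positivity
      linarith
    set K : ℝ := EK + 1 with hK
    have hK1 : 1 ≤ K := by linarith
    set g : ℕ → Ω → ℝ :=
      fun n ω => ((S n ω).1 : ℝ) ^ 2 + ((S n ω).2 : ℝ) ^ 2 with hg
    have hcoord : ∀ n ω, ((S n ω).1 : ℝ) = (∑ k ∈ Finset.range n, Y k) ω ∧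
        ((S n ω).2 : ℝ) = (∑ k ∈ Finset.range n, W k) ω := by
      intro n ω
      rw [hS]
      constructor
      · rw [Prod.fst_sum]; push_cast; simp [hY]
      · rw [Prod.snd_sum]; push_cast; simp [hW]
    have hgeq : ∀ n, g n = fun ω =>
        ((∑ k ∈ Finset.range n, Y k) ^ 2) ω + ((∑ k ∈ Finset.range n, W k) ^ 2) ω := by
      intro n; funext ω
      rw [hg]
      simp only [Pi.pow_apply]
      rw [(hcoord n ω).1, (hcoord n ω).2]
    have hgint : ∀ n, Integrable (g n) μ := by
      intro n
      rw [hgeq n]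
      exact ((memLp_finsetSum' _ fun k _ => hYL2k k).integrable_sq).add
        ((memLp_finsetSum' _ fun k _ => hWL2k k).integrable_sq)
    have hgE : ∀ n : ℕ, ∫ ω, g n ω ∂μ = n * EK := by
      intro n
      have : ∫ ω, g n ω ∂μ = μ[(∑ k ∈ Finset.range n, Y k) ^ 2]
          + μ[(∑ k ∈ Finset.range n, W k) ^ 2] := by
        rw [hgeq n]
        exact integral_add (memLp_finsetSum' _ fun k _ => hYL2k k).integrable_sq
          (memLp_finsetSum' _ fun k _ => hWL2k k).integrable_sq
      rw [this, hEY2 n, hEW2 n, hEK]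
      ring
    -- Markov's inequality
    have hmarkov : ∀ n : ℕ, 1 ≤ n → (μ {ω | 2 * K * n ≤ g n ω}).toReal ≤ 1 / 2 := by
      intro n hn
      have hm := mul_meas_ge_le_integral_of_nonneg
        (ae_of_all μ fun ω => by rw [hg]; positivity) (hgint n) (2 * K * n)
      rw [hgE n, measureReal_def] at hm
      have ht : 0 ≤ (μ {ω | 2 * K * n ≤ g n ω}).toReal := ENNReal.toReal_nonneg
      have hEKK : EK ≤ K := by rw [hK]; linarith
      have hn1 : (1 : ℝ) ≤ n := by exact_mod_cast hn
      have hKn : (0:ℝ) < K * n := by nlinarith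
      nlinarith [hm, mul_le_mul_of_nonneg_left hEKK (by positivity : (0:ℝ) ≤ (n:ℝ)), hKn]
    -- the lattice ball
    refine ⟨(2 * Real.sqrt (2 * K) + 3) ^ 2, by positivity, fun n hn => ?_⟩
    set b : ℤ := ⌈Real.sqrt (2 * K * n)⌉ with hb
    have hb0 : 0 ≤ b := Int.ceil_nonneg (Real.sqrt_nonneg _)
    refine ⟨Finset.Icc (-b, -b) (b, b), ?_, ?_⟩
    · -- cardinality bound
      have hcard : (Finset.Icc (-b, -b) (b, b)).card = ((2 * b + 1).toNat) ^ 2 := by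
        rw [Finset.Icc_prod_def, Finset.card_product]
        simp only [Int.card_Icc]
        have : b + 1 - -b = 2 * b + 1 := by ring
        rw [this]
        ring
      rw [hcard]
      have hbr : (b : ℝ) ≤ Real.sqrt (2 * K) * Real.sqrt n + 1 := by
        have h1 : (b : ℝ) ≤ Real.sqrt (2 * K * n) + 1 := le_of_lt (Int.ceil_lt_add_one _)
        rwa [Real.sqrt_mul (by linarith) (n : ℝ)] at h1
      have hs1 : 1 ≤ Real.sqrt n := by
        rw [show (1:ℝ) = Real.sqrt 1 by simp]
        exact Real.sqrt_le_sqrt (by exact_mod_cast hn)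
      have hsn : Real.sqrt n ^ 2 = n := Real.sq_sqrt (by positivity)
      have h2K : 0 ≤ Real.sqrt (2 * K) := Real.sqrt_nonneg _
      have htn : ((2 * b + 1).toNat : ℝ) = 2 * (b : ℝ) + 1 := by
        have := Int.toNat_of_nonneg (by omega : (0:ℤ) ≤ 2 * b + 1)
        exact_mod_cast congrArg (Int.cast : ℤ → ℝ) this
      have hc2 : (((2 * b + 1).toNat ^ 2 : ℕ) : ℝ) = (2 * (b:ℝ) + 1) ^ 2 := by
        rw [Nat.cast_pow, htn]
      rw [hc2]
      have hbr0 : (0:ℝ) ≤ (b:ℝ) := by exact_mod_cast hb0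
      nlinarith [hbr, hs1, hsn, h2K, hbr0]
    · -- mass bound
      have hsub : {ω | ¬ 2 * K * n ≤ g n ω} ⊆ {ω | S n ω ∈ Finset.Icc (-b, -b) (b, b)} := by
        intro ω hω
        simp only [Set.mem_setOf_eq, not_le] at hω
        have hKn0 : (0:ℝ) ≤ 2 * K * n := by positivity
        have habs : ∀ c : ℝ, c ^ 2 ≤ 2 * K * n → |c| ≤ (b : ℝ) := by
          intro c hc
          have h1 : |c| = Real.sqrt (c ^ 2) := (Real.sqrt_sq_eq_abs c).symm
          rw [h1]
          exact le_trans (Real.sqrt_le_sqrt hc) (Int.le_ceil _)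
        have h1 : ((S n ω).1 : ℝ) ^ 2 ≤ 2 * K * n := by
          have := hω; simp only [hg] at this; nlinarith [sq_nonneg ((S n ω).2 : ℝ)]
        have h2 : ((S n ω).2 : ℝ) ^ 2 ≤ 2 * K * n := by
          have := hω; simp only [hg] at this; nlinarith [sq_nonneg ((S n ω).1 : ℝ)]
        have ha1 : |(S n ω).1| ≤ b := by
          have := habs _ h1
          rwa [← Int.cast_abs, Int.cast_le] at this
        have ha2 : |(S n ω).2| ≤ b := by
          have := habs _ h2
          rwa [← Int.cast_abs, Int.cast_le] at this
        simp only [Set.mem_setOf_eq, Finset.mem_Icc]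
        obtain ⟨hl1, hr1⟩ := abs_le.1 ha1
        obtain ⟨hl2, hr2⟩ := abs_le.1 ha2
        exact ⟨⟨hl1, hl2⟩, ⟨hr1, hr2⟩⟩
      have hmg : MeasurableSet {ω | 2 * K * n ≤ g n ω} := by
        have : Measurable (g n) := by
          rw [hg]
          exact ((measurable_of_countable (fun p : ℤ × ℤ => ((p.1:ℝ))^2)).comp (hSmeas n)).add
            ((measurable_of_countable (fun p : ℤ × ℤ => ((p.2:ℝ))^2)).comp (hSmeas n))
        exact measurableSet_le measurable_const this
      have hcompl : μ {ω | 2 * K * n ≤ g n ω}ᶜ ≤ μ {ω | S n ω ∈ Finset.Icc (-b, -b) (b, b)} :=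
        measure_mono hsub
      have h1 : 1 / 2 ≤ (μ {ω | S n ω ∈ Finset.Icc (-b, -b) (b, b)}).toReal := by
        have hcV : μ {ω | 2 * K * n ≤ g n ω}ᶜ = 1 - μ {ω | 2 * K * n ≤ g n ω} :=
          prob_compl_eq_one_sub hmg
        have hle1 : μ {ω | 2 * K * n ≤ g n ω} ≤ 1 := prob_le_one
        have htr : (μ {ω | 2 * K * n ≤ g n ω}ᶜ).toReal
            = 1 - (μ {ω | 2 * K * n ≤ g n ω}).toReal := by
          rw [hcV, ENNReal.toReal_sub_of_le hle1 ENNReal.one_ne_top]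
          simp
        have hmono := ENNReal.toReal_mono (measure_ne_top μ _) hcompl
        rw [htr] at hmono
        have := hmarkov n hn
        linarith
      refine le_trans h1 ?_
      have hcover : {ω | S n ω ∈ Finset.Icc (-b, -b) (b, b)}
          ⊆ ⋃ x ∈ Finset.Icc (-b, -b) (b, b), S n ⁻¹' {x} := by
        intro ω hω
        simp only [Set.mem_iUnion]
        exact ⟨S n ω, hω, rfl⟩
      have hle := le_trans (measure_mono hcover)
        (measure_biUnion_finset_le (μ := μ) (Finset.Icc (-b, -b) (b, b)) fun x => S n ⁻¹' {x})
      have := ENNReal.toReal_mono (by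
        refine (lt_of_le_of_lt (Finset.sum_le_sum fun x _ => measure_mono (Set.subset_univ _))
          ?_).ne
        simp only [measure_univ, Finset.sum_const, nsmul_eq_mul, mul_one]
        exact lt_of_le_of_ne le_top (ENNReal.natCast_ne_top _)) hle
      rw [ENNReal.toReal_sum fun x _ => measure_ne_top μ _] at this
      exact this
  -- per-n lower bound
  have hlow : ∀ n : ℕ, 1 ≤ n →
      ENNReal.ofReal (1 / (4 * D * n)) ≤ μ {ω | S (2 * n) ω = 0} := by
    intro n hn
    obtain ⟨B, hBcard, hBmass⟩ := hhalf n hn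
    set q : ℤ × ℤ → ℝ := fun x => (μ (S n ⁻¹' {x})).toReal with hq
    have hq0 : ∀ x, 0 ≤ q x := fun x => ENNReal.toReal_nonneg
    have hcs : (∑ x ∈ B, q x) ^ 2 ≤ B.card * ∑ x ∈ B, q x ^ 2 := sq_sum_le_card_mul_sum_sq
    have hdT : ∑ x ∈ B, q x ^ 2 ≤ (μ {ω | S (2 * n) ω = 0}).toReal := by
      have h := ENNReal.toReal_mono (measure_ne_top μ _) (hdecomp n B)
      rw [ENNReal.toReal_sum
        (fun x _ => ENNReal.mul_ne_top (measure_ne_top μ _) (measure_ne_top μ _))] at h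
      calc ∑ x ∈ B, q x ^ 2
          = ∑ x ∈ B, (μ (S n ⁻¹' {x}) * μ (S n ⁻¹' {x})).toReal := by
            refine Finset.sum_congr rfl fun x _ => ?_
            rw [ENNReal.toReal_mul, hq]; ring
        _ ≤ _ := h
    have hn1 : (1:ℝ) ≤ n := by exact_mod_cast hn
    have hsnn : 0 ≤ ∑ x ∈ B, q x ^ 2 := Finset.sum_nonneg fun x _ => by positivity
    have h0 : (0:ℝ) ≤ ∑ x ∈ B, q x := Finset.sum_nonneg fun x _ => hq0 x
    have hmass2 : (1/2:ℝ) * (1/2) ≤ (∑ x ∈ B, q x) * (∑ x ∈ B, q x) :=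
      mul_le_mul hBmass hBmass (by norm_num) h0
    have hcard' : (B.card : ℝ) * ∑ x ∈ B, q x ^ 2 ≤ D * n * ∑ x ∈ B, q x ^ 2 :=
      mul_le_mul_of_nonneg_right hBcard hsnn
    have hDn : (0:ℝ) < D * n := by positivity
    have h4 : (1:ℝ)/4 ≤ D * n * (μ {ω | S (2 * n) ω = 0}).toReal := by
      have h5 : D * n * (∑ x ∈ B, q x ^ 2) ≤ D * n * (μ {ω | S (2 * n) ω = 0}).toReal :=
        mul_le_mul_of_nonneg_left hdT (le_of_lt hDn)
      have hcs' : (∑ x ∈ B, q x) * (∑ x ∈ B, q x) ≤ (B.card : ℝ) * ∑ x ∈ B, q x ^ 2 := by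
        have := hcs; rwa [sq] at this
      linarith [hmass2, hcs', hcard', h5]
    have hfinal : 1 / (4 * D * n) ≤ (μ {ω | S (2 * n) ω = 0}).toReal := by
      rw [div_le_iff₀ (by positivity : (0:ℝ) < 4 * D * n)]
      nlinarith [h4]
    exact ENNReal.ofReal_le_of_le_toReal hfinal
  -- conclusion
  have hinj : Function.Injective (fun n : ℕ => 2 * (n + 1)) := fun a b h => by
    simpa using h
  have h1 : ∑' n : ℕ, μ {ω | S (2 * (n + 1)) ω = 0} ≤ ∑' n : ℕ, μ {ω | S n ω = 0} :=
    ENNReal.tsum_comp_le_tsum_of_injective hinj fun m => μ {ω | S m ω = 0}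
  have h2 : ∑' n : ℕ, ENNReal.ofReal (1 / (4 * D * ((n:ℝ) + 1)))
      ≤ ∑' n : ℕ, μ {ω | S (2 * (n + 1)) ω = 0} := by
    refine ENNReal.tsum_le_tsum fun n => ?_
    have h := hlow (n + 1) (by omega)
    have e : ((n + 1 : ℕ) : ℝ) = (n : ℝ) + 1 := by push_cast; ring
    rwa [e] at h
  have h3 : ∑' n : ℕ, ENNReal.ofReal (1 / (4 * D * ((n:ℝ) + 1))) = ⊤ := by
    by_contra hc
    have hs := ENNReal.summable_toReal hc
    have hs' : Summable (fun n : ℕ => 1 / (4 * D * ((n:ℝ) + 1))) := by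
      have he : ∀ n : ℕ, (ENNReal.ofReal (1 / (4 * D * ((n:ℝ) + 1)))).toReal
          = 1 / (4 * D * ((n:ℝ) + 1)) := fun n => ENNReal.toReal_ofReal (by positivity)
      exact hs.congr he
    have hs2 : Summable (fun n : ℕ => 1 / ((n:ℝ) + 1)) := by
      have h := hs'.mul_left (4 * D)
      refine h.congr fun n => ?_
      field_simp
    have hs3 : Summable (fun n : ℕ => 1 / ((n:ℕ):ℝ)) := by
      refine (summable_nat_add_iff 1).1 ?_
      refine hs2.congr fun n => ?_
      push_cast; ring
    exact Real.not_summable_one_div_natCast hs3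
  rw [eq_top_iff]
  calc (⊤:ENNReal) = _ := h3.symm
    _ ≤ _ := h2
    _ ≤ _ := h1
end

section
/- Let (X_k)_{k≥1} be a sequence of independent and identically distributed ℤ²-valued random variables with E(‖X_1‖₂²) < ∞ and such that X_1 and −X_1 have the same distribution, and set S_n = X_1 + X_2 + ⋯ + X_n. Then there exist a constant C > 0 and an integer N such that for all n ≥ N, P[S_{2n} = 0] ≥ C/n. -/
open MeasureTheory ProbabilityTheory Filter ENNReal

namespace ProbReturnAux
abbrev G := ℤ × ℤ

noncomputable def convPow (ν : Measure G) : ℕ → Measure G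
  | 0 => Measure.dirac 0
  | n+1 => Measure.map (fun p : G × G => p.1 + p.2) (ν.prod (convPow ν n))

instance convPow_prob (ν : Measure G) [IsProbabilityMeasure ν] (n : ℕ) :
    IsProbabilityMeasure (convPow ν n) := by
  induction n with
  | zero => exact Measure.dirac.isProbabilityMeasure
  | succ n ih => exact Measure.isProbabilityMeasure_map (measurable_of_countable _).aemeasurable

lemma convPow_neg (ν : Measure G) [IsProbabilityMeasure ν]
    (hν : Measure.map (fun x : G => -x) ν = ν) (n : ℕ) :
    Measure.map (fun x : G => -x) (convPow ν n) = convPow ν n := by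
  induction n with
  | zero =>
    rw [convPow, Measure.map_dirac' (measurable_of_countable _)]
    simp
  | succ n ih =>
    rw [convPow, Measure.map_map (measurable_of_countable _) (measurable_of_countable _)]
    have : ((fun x : G => -x) ∘ fun p : G × G => p.1 + p.2)
        = (fun p : G × G => p.1 + p.2) ∘ Prod.map (fun x : G => -x) (fun x : G => -x) := by
      funext p; simp [neg_add]; abel
    rw [this, ← Measure.map_map (measurable_of_countable _) (measurable_of_countable _),
      ← Measure.map_prod_map _ _ (measurable_of_countable _) (measurable_of_countable _),
      hν, ih]

variable {Ω : Type*} [MeasurableSpace Ω] {μ : Measure Ω} [IsProbabilityMeasure μ]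
  {X : ℕ → Ω → G}

/-- Independence of a variable and a block sum not containing it. -/
lemma indep_sum_of_not_mem (hmeas : ∀ n, Measurable (X n))
    (hindep : iIndepFun X μ) {s : Finset ℕ} {i : ℕ} (hi : i ∉ s) :
    IndepFun (X i) (fun ω => ∑ k ∈ s, X k ω) μ := by
  have h := (hindep.indepFun_finsetSum_of_notMem hmeas hi).symm
  have e : (fun ω => ∑ k ∈ s, X k ω) = ∑ j ∈ s, X j := by funext ω; simp
  rw [e]; exact h

/-- Independence of block sums over disjoint finsets. -/
lemma indep_sum_sum (hmeas : ∀ n, Measurable (X n))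
    (hindep : iIndepFun X μ) {s t : Finset ℕ} (hst : Disjoint s t) :
    IndepFun (fun ω => ∑ k ∈ s, X k ω) (fun ω => ∑ k ∈ t, X k ω) μ := by
  classical
  have h := hindep.indepFun_finset s t hst hmeas
  have := h.comp (φ := fun v : (k : s) → G => ∑ k : s, v k)
    (ψ := fun v : (k : t) → G => ∑ k : t, v k)
    (Finset.univ.measurable_sum (fun k _ => measurable_pi_apply k))
    (Finset.univ.measurable_sum (fun k _ => measurable_pi_apply k))
  have e₁ : (fun ω => ∑ k ∈ s, X k ω)
      = (fun v : (k : s) → G => ∑ k : s, v k) ∘ fun a (i : s) => X (↑i) a := by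
    funext ω; exact (Finset.sum_attach _ _).symm
  have e₂ : (fun ω => ∑ k ∈ t, X k ω)
      = (fun v : (k : t) → G => ∑ k : t, v k) ∘ fun a (i : t) => X (↑i) a := by
    funext ω; exact (Finset.sum_attach _ _).symm
  rw [e₁, e₂]; exact this

lemma map_sum_eq (hmeas : ∀ n, Measurable (X n))
    (hindep : iIndepFun X μ)
    (hident : ∀ n, IdentDistrib (X n) (X 0) μ μ)
    (s : Finset ℕ) :
    μ.map (fun ω => ∑ k ∈ s, X k ω) = convPow (μ.map (X 0)) s.card := by
  classical
  induction s using Finset.cons_induction with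
  | empty =>
    simp only [Finset.sum_empty, Finset.card_empty, convPow]
    rw [Measure.map_const]; simp
  | cons i s hi ih =>
    have hsum : Measurable fun ω => ∑ k ∈ s, X k ω :=
      Finset.measurable_sum _ fun k _ => hmeas k
    have hpair : μ.map (fun ω => (X i ω, ∑ k ∈ s, X k ω))
        = (μ.map (X i)).prod (μ.map (fun ω => ∑ k ∈ s, X k ω)) := by
      exact (indepFun_iff_map_prod_eq_prod_map_map (hmeas i).aemeasurable
        hsum.aemeasurable).mp (indep_sum_of_not_mem hmeas hindep hi)
    have : (fun ω => ∑ k ∈ Finset.cons i s hi, X k ω)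
        = (fun p : G × G => p.1 + p.2) ∘ (fun ω => (X i ω, ∑ k ∈ s, X k ω)) := by
      funext ω; rw [Finset.sum_cons]; rfl
    rw [this, ← Measure.map_map (measurable_of_countable _) ((hmeas i).prodMk hsum),
      hpair, ih, (hident i).map_eq, Finset.card_cons, convPow]


lemma map_neg_law (hmeas : ∀ n, Measurable (X n))
    (hsymm : Measure.map (X 0) μ = Measure.map (fun ω => -(X 0 ω)) μ) : Measure.map (fun x : G => -x) (μ.map (X 0)) = μ.map (X 0) := by
  rw [Measure.map_map (measurable_of_countable _) (hmeas 0)]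
  exact ((congrArg _ rfl).trans hsymm.symm)

lemma prob_return_eq (hmeas : ∀ n, Measurable (X n))
    (hindep : iIndepFun X μ)
    (hident : ∀ n, IdentDistrib (X n) (X 0) μ μ)
    (hsymm : Measure.map (X 0) μ = Measure.map (fun ω => -(X 0 ω)) μ) (n : ℕ) :
    μ {ω | (∑ k ∈ Finset.range (2*n), X k ω) = 0}
      = ∑' x : G, (convPow (μ.map (X 0)) n) {x} * (convPow (μ.map (X 0)) n) {x} := by
  classical
  set ν := μ.map (X 0) with hν
  have : IsProbabilityMeasure ν := Measure.isProbabilityMeasure_map (hmeas 0).aemeasurable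
  set ρ := convPow ν n with hρ
  have hsplit : ∀ ω, (∑ k ∈ Finset.range (2*n), X k ω)
      = (∑ k ∈ Finset.range n, X k ω) + ∑ k ∈ Finset.Ico n (2*n), X k ω := by
    intro ω
    rw [Finset.range_eq_Ico, Finset.range_eq_Ico,
      Finset.sum_Ico_consecutive (fun k => X k ω) (Nat.zero_le n) (by omega : n ≤ 2*n)]
  set A : Ω → G := fun ω => ∑ k ∈ Finset.range n, X k ω with hA
  set B : Ω → G := fun ω => ∑ k ∈ Finset.Ico n (2*n), X k ω with hB
  have hAm : Measurable A := Finset.measurable_sum _ fun k _ => hmeas k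
  have hBm : Measurable B := Finset.measurable_sum _ fun k _ => hmeas k
  have hlawA : μ.map A = ρ := by
    rw [hA, map_sum_eq hmeas hindep hident]; simp [hρ, hν]
  have hlawB : μ.map B = ρ := by
    rw [hB, map_sum_eq hmeas hindep hident, Nat.card_Ico]
    congr 1; omega
  have hpair : μ.map (fun ω => (A ω, B ω)) = ρ.prod ρ := by
    refine ((indepFun_iff_map_prod_eq_prod_map_map hAm.aemeasurable hBm.aemeasurable).mp
      (indep_sum_sum hmeas hindep (by
        rw [Finset.range_eq_Ico]; exact Finset.Ico_disjoint_Ico_consecutive 0 n (2*n)))).trans ?_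
    rw [hlawA, hlawB]
  have hE : MeasurableSet {p : G × G | p.1 + p.2 = 0} :=
    (Set.to_countable _).measurableSet
  have h1 : μ {ω | (∑ k ∈ Finset.range (2*n), X k ω) = 0}
      = (ρ.prod ρ) {p : G × G | p.1 + p.2 = 0} := by
    rw [← hpair, Measure.map_apply (hAm.prodMk hBm) hE]
    congr 1; ext ω; simp [hsplit ω, hA, hB]
  rw [h1, Measure.prod_apply hE]
  have h2 : ∀ x : G, (Prod.mk x ⁻¹' {p : G × G | p.1 + p.2 = 0}) = {-x} := by
    intro x; ext y
    simp only [Set.mem_preimage, Set.mem_setOf_eq, Set.mem_singleton_iff]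
    constructor
    · exact fun h => eq_neg_of_add_eq_zero_right h
    · rintro rfl; simp
  have hsymmρ : ∀ x : G, ρ {-x} = ρ {x} := by
    intro x
    have hmapneg := convPow_neg ν (map_neg_law hmeas hsymm) n
    have h3 : (convPow ν n) {x} = (convPow ν n) ((fun y : G => -y) ⁻¹' {x}) := by
      conv_lhs => rw [← hmapneg]
      rw [Measure.map_apply (measurable_of_countable _) ((Set.to_countable _).measurableSet)]
    rw [hρ, h3]
    congr 1
    ext y
    simp only [Set.mem_preimage, Set.mem_singleton_iff]
    constructor <;> · rintro rfl; simp
  simp_rw [h2, lintegral_countable' (fun x => ρ {-x}), fun x => hsymmρ x]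

lemma integral_sq_sum (hmeas : ∀ n, Measurable (X n))
    (hindep : iIndepFun X μ)
    (hident : ∀ n, IdentDistrib (X n) (X 0) μ μ)
    (hsq : Integrable (fun ω => ((X 0 ω).1 : ℝ) ^ 2 + ((X 0 ω).2 : ℝ) ^ 2) μ)
    (hsymm : Measure.map (X 0) μ = Measure.map (fun ω => -(X 0 ω)) μ)
    (n : ℕ) :
    Integrable (fun ω => ((∑ k ∈ Finset.range n, X k ω).1 : ℝ)^2
        + ((∑ k ∈ Finset.range n, X k ω).2 : ℝ)^2) μ ∧
    ∫ ω, (((∑ k ∈ Finset.range n, X k ω).1 : ℝ)^2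
        + ((∑ k ∈ Finset.range n, X k ω).2 : ℝ)^2) ∂μ
      = n * ∫ ω, (((X 0 ω).1 : ℝ)^2 + ((X 0 ω).2 : ℝ)^2) ∂μ := by
  classical
  set g1 : G → ℝ := fun p => (p.1 : ℝ) with hg1
  set g2 : G → ℝ := fun p => (p.2 : ℝ) with hg2
  set Y : ℕ → Ω → ℝ := fun k ω => g1 (X k ω) with hY
  set Z : ℕ → Ω → ℝ := fun k ω => g2 (X k ω) with hZ
  have hYm : ∀ k, Measurable (Y k) := fun k => (measurable_of_countable g1).comp (hmeas k)
  have hZm : ∀ k, Measurable (Z k) := fun k => (measurable_of_countable g2).comp (hmeas k)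
  have hindepY : iIndepFun Y μ :=
    hindep.comp (fun _ => g1) (fun _ => measurable_of_countable g1)
  have hindepZ : iIndepFun Z μ :=
    hindep.comp (fun _ => g2) (fun _ => measurable_of_countable g2)
  have identY : ∀ k, IdentDistrib (Y k) (Y 0) μ μ :=
    fun k => (hident k).comp (measurable_of_countable g1)
  have identZ : ∀ k, IdentDistrib (Z k) (Z 0) μ μ :=
    fun k => (hident k).comp (measurable_of_countable g2)
  have hY0sq : Integrable (fun ω => Y 0 ω ^ 2) μ := by
    refine hsq.mono' ((hYm 0).pow_const 2).aestronglyMeasurable (Filter.Eventually.of_forall ?_)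
    intro ω
    rw [Real.norm_eq_abs, abs_of_nonneg (sq_nonneg _)]
    exact le_add_of_nonneg_right (sq_nonneg _)
  have hZ0sq : Integrable (fun ω => Z 0 ω ^ 2) μ := by
    refine hsq.mono' ((hZm 0).pow_const 2).aestronglyMeasurable (Filter.Eventually.of_forall ?_)
    intro ω
    rw [Real.norm_eq_abs, abs_of_nonneg (sq_nonneg _)]
    exact le_add_of_nonneg_left (sq_nonneg _)
  have hY0L2 : MemLp (Y 0) 2 μ := (memLp_two_iff_integrable_sq (hYm 0).aestronglyMeasurable).2 hY0sq
  have hZ0L2 : MemLp (Z 0) 2 μ := (memLp_two_iff_integrable_sq (hZm 0).aestronglyMeasurable).2 hZ0sq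
  have hYL2 : ∀ k, MemLp (Y k) 2 μ := fun k => (identY k).symm.memLp_snd hY0L2
  have hZL2 : ∀ k, MemLp (Z k) 2 μ := fun k => (identZ k).symm.memLp_snd hZ0L2
  -- mean zero
  have hmean : ∀ (g : G → ℝ), (∀ p, g (-p) = - g p) →
      ∫ ω, g (X 0 ω) ∂μ = 0 := by
    intro g hgodd
    have h1 : ∫ ω, g (X 0 ω) ∂μ = ∫ p, g p ∂(μ.map (X 0)) :=
      (integral_map (hmeas 0).aemeasurable (measurable_of_countable g).aestronglyMeasurable).symm
    have h2 : ∫ p, g p ∂(μ.map (X 0)) = ∫ ω, g (-(X 0 ω)) ∂μ := by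
      rw [hsymm]
      exact integral_map ((measurable_of_countable _).comp (hmeas 0)).aemeasurable
        (measurable_of_countable g).aestronglyMeasurable
    have h3 : ∫ ω, g (-(X 0 ω)) ∂μ = - ∫ ω, g (X 0 ω) ∂μ := by
      simp_rw [hgodd]; exact integral_neg _
    have := h1.trans (h2.trans h3)
    linarith
  have hEY0 : ∫ ω, Y 0 ω ∂μ = 0 := hmean g1 (fun p => by simp [hg1])
  have hEZ0 : ∫ ω, Z 0 ω ∂μ = 0 := hmean g2 (fun p => by simp [hg2])
  have hEY : ∀ k, ∫ ω, Y k ω ∂μ = 0 := fun k => ((identY k).integral_eq).trans hEY0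
  have hEZ : ∀ k, ∫ ω, Z k ω ∂μ = 0 := fun k => ((identZ k).integral_eq).trans hEZ0
  -- variance computation, generic in the coordinate
  have key : ∀ (W : ℕ → Ω → ℝ), (∀ k, MemLp (W k) 2 μ) →
      iIndepFun W μ → (∀ k, IdentDistrib (W k) (W 0) μ μ) →
      (∀ k, ∫ ω, W k ω ∂μ = 0) →
      ∫ ω, (∑ k ∈ Finset.range n, W k ω)^2 ∂μ = n * ∫ ω, W 0 ω ^2 ∂μ := by
    intro W hWL2 hWindep hWident hWmean
    have hsumL2 : MemLp (∑ k ∈ Finset.range n, W k) 2 μ :=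
      memLp_finsetSum' _ (fun i _ => hWL2 i)
    have hv := IndepFun.variance_sum (μ := μ) (fun i (_ : i ∈ Finset.range n) => hWL2 i)
      (fun i _ j _ hij => hWindep.indepFun hij)
    have hvar0 : ∀ k, variance (W k) μ = ∫ ω, W 0 ω ^2 ∂μ := by
      intro k
      rw [(hWident k).variance_eq, variance_eq_sub (hWL2 0)]
      have h0 : μ[W 0] = 0 := hWmean 0
      rw [h0, show (0:ℝ)^2 = 0 by norm_num, sub_zero]
      rfl
    have hmeansum : μ[∑ k ∈ Finset.range n, W k] = 0 := by
      have : ∫ ω, (∑ k ∈ Finset.range n, W k) ω ∂μ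
          = ∑ k ∈ Finset.range n, ∫ ω, W k ω ∂μ := by
        simp_rw [Finset.sum_apply]
        exact integral_finset_sum _ (fun i _ => (hWL2 i).integrable one_le_two)
      rw [this]
      simp [hWmean]
    have hvd := variance_eq_sub hsumL2
    rw [hv] at hvd
    simp only [hvar0, Finset.sum_const, Finset.card_range, nsmul_eq_mul] at hvd
    rw [hmeansum] at hvd
    norm_num at hvd
    exact hvd.symm
  have keyY := key Y hYL2 hindepY identY hEY
  have keyZ := key Z hZL2 hindepZ identZ hEZ
  have hfst : ∀ ω, ((∑ k ∈ Finset.range n, X k ω).1 : ℝ) = ∑ k ∈ Finset.range n, Y k ω := by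
    intro ω
    rw [Prod.fst_sum]
    push_cast
    rfl
  have hsnd : ∀ ω, ((∑ k ∈ Finset.range n, X k ω).2 : ℝ) = ∑ k ∈ Finset.range n, Z k ω := by
    intro ω
    rw [Prod.snd_sum]
    push_cast
    rfl
  have hWsq : Integrable (fun ω => (∑ k ∈ Finset.range n, Y k ω)^2) μ := by
    have := (memLp_finsetSum' (μ := μ) (Finset.range n) (fun i _ => hYL2 i)).integrable_sq
    simpa [Finset.sum_apply] using this
  have hVsq : Integrable (fun ω => (∑ k ∈ Finset.range n, Z k ω)^2) μ := by
    have := (memLp_finsetSum' (μ := μ) (Finset.range n) (fun i _ => hZL2 i)).integrable_sq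
    simpa [Finset.sum_apply] using this
  constructor
  · simp_rw [hfst, hsnd]
    exact hWsq.add hVsq
  · calc ∫ ω, (((∑ k ∈ Finset.range n, X k ω).1 : ℝ)^2
        + ((∑ k ∈ Finset.range n, X k ω).2 : ℝ)^2) ∂μ
        = ∫ ω, ((∑ k ∈ Finset.range n, Y k ω)^2 + (∑ k ∈ Finset.range n, Z k ω)^2) ∂μ := by
          simp_rw [hfst, hsnd]
      _ = (∫ ω, (∑ k ∈ Finset.range n, Y k ω)^2 ∂μ)
          + ∫ ω, (∑ k ∈ Finset.range n, Z k ω)^2 ∂μ := integral_add hWsq hVsq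
      _ = n * ((∫ ω, Y 0 ω^2 ∂μ) + ∫ ω, Z 0 ω^2 ∂μ) := by rw [keyY, keyZ]; ring
      _ = n * ∫ ω, (((X 0 ω).1 : ℝ)^2 + ((X 0 ω).2 : ℝ)^2) ∂μ := by
          rw [← integral_add hY0sq hZ0sq]

lemma half_le_prob_box (hmeas : ∀ n, Measurable (X n))
    (hindep : iIndepFun X μ)
    (hident : ∀ n, IdentDistrib (X n) (X 0) μ μ)
    (hsq : Integrable (fun ω => ((X 0 ω).1 : ℝ) ^ 2 + ((X 0 ω).2 : ℝ) ^ 2) μ)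
    (hsymm : Measure.map (X 0) μ = Measure.map (fun ω => -(X 0 ω)) μ)
    (n : ℕ) (hn : 1 ≤ n) :
    (1:ℝ)/2 ≤ ((μ.map (fun ω => ∑ k ∈ Finset.range n, X k ω))
      ↑((Finset.Icc (-((⌈2 * (∫ ω, (((X 0 ω).1 : ℝ)^2 + ((X 0 ω).2 : ℝ)^2) ∂μ) + 1⌉₊ : ℤ) * (Nat.sqrt n + 1)))
          ((⌈2 * (∫ ω, (((X 0 ω).1 : ℝ)^2 + ((X 0 ω).2 : ℝ)^2) ∂μ) + 1⌉₊ : ℤ) * (Nat.sqrt n + 1))) ×ˢ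
        (Finset.Icc (-((⌈2 * (∫ ω, (((X 0 ω).1 : ℝ)^2 + ((X 0 ω).2 : ℝ)^2) ∂μ) + 1⌉₊ : ℤ) * (Nat.sqrt n + 1)))
          ((⌈2 * (∫ ω, (((X 0 ω).1 : ℝ)^2 + ((X 0 ω).2 : ℝ)^2) ∂μ) + 1⌉₊ : ℤ) * (Nat.sqrt n + 1))))).toReal := by
  classical
  set m : ℝ := ∫ ω, (((X 0 ω).1 : ℝ)^2 + ((X 0 ω).2 : ℝ)^2) ∂μ with hm
  have hm0 : 0 ≤ m := integral_nonneg (fun ω => by positivity)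
  set a : ℕ := ⌈2 * m + 1⌉₊ with ha
  have ha1 : 1 ≤ a := by
    rw [ha]; exact Nat.one_le_iff_ne_zero.mpr (by positivity)
  have haR : 2 * m + 1 ≤ (a : ℝ) := Nat.le_ceil _
  set b : ℤ := (a : ℤ) * (Nat.sqrt n + 1) with hb
  have hbpos : 0 < b := by positivity
  set Sf : Ω → G := fun ω => ∑ k ∈ Finset.range n, X k ω with hSf
  have hSm : Measurable Sf := Finset.measurable_sum _ fun k _ => hmeas k
  set f : Ω → ℝ := fun ω => ((Sf ω).1 : ℝ)^2 + ((Sf ω).2 : ℝ)^2 with hf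
  have hfm : Measurable f :=
    (measurable_of_countable (fun p : G => ((p.1:ℝ)^2 + (p.2:ℝ)^2))).comp hSm
  obtain ⟨hfint, hfval⟩ := integral_sq_sum hmeas hindep hident hsq hsymm n
  set ε : ℝ := (n : ℝ) * (2 * m + 1) with hε
  have hεpos : 0 < ε := by
    have : (1:ℝ) ≤ (n:ℝ) := by exact_mod_cast hn
    positivity
  have hmarkov := mul_meas_ge_le_integral_of_nonneg
    (Filter.Eventually.of_forall (fun ω => by positivity : ∀ ω, 0 ≤ f ω)) hfint ε
  rw [hfval] at hmarkov
  have hAmeas : MeasurableSet {x | ε ≤ f x} := measurableSet_le measurable_const hfm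
  have htail : (μ {x | ε ≤ f x}).toReal ≤ 1/2 := by
    have h2 : (n:ℝ) * m ≤ ε * (1/2) := by
      rw [hε]
      have : (0:ℝ) ≤ (n:ℝ) := Nat.cast_nonneg n
      nlinarith [(Nat.one_le_cast.mpr hn : (1:ℝ) ≤ (n:ℝ))]
    have h3 : ε * (μ {x | ε ≤ f x}).toReal ≤ ε * (1/2) := le_trans hmarkov h2
    exact le_of_mul_le_mul_left h3 hεpos
  have hcompl : 1/2 ≤ (μ {x | ε ≤ f x}ᶜ).toReal := by
    rw [prob_compl_eq_one_sub hAmeas, ENNReal.toReal_sub_of_le prob_le_one one_ne_top]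
    simp only [ENNReal.toReal_one]
    linarith
  have hsub : {x | ε ≤ f x}ᶜ ⊆ Sf ⁻¹' ↑((Finset.Icc (-b) b) ×ˢ (Finset.Icc (-b) b)) := by
    intro ω hω
    simp only [Set.mem_compl_iff, Set.mem_setOf_eq, not_le] at hω
    have hxa : ∀ (x : ℤ), (x:ℝ)^2 ≤ f ω → -b ≤ x ∧ x ≤ b := by
      intro x hx
      have hsq2 : (x:ℝ)^2 ≤ (b:ℝ)^2 := by
        have h1 : (n:ℝ) * (2*m+1) ≤ (n:ℝ) * a := by
          have : (0:ℝ) ≤ (n:ℝ) := Nat.cast_nonneg n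
          nlinarith
        have h2 : (n:ℝ) ≤ ((Nat.sqrt n + 1 : ℕ):ℝ)^2 := by
          exact_mod_cast (Nat.lt_succ_sqrt' n).le
        have h3 : (1:ℝ) ≤ (a:ℝ) := by exact_mod_cast ha1
        have hb2 : ((b:ℝ))^2 = ((a:ℝ))^2 * ((Nat.sqrt n + 1 : ℕ):ℝ)^2 := by
          rw [hb]; push_cast; ring
        rw [hb2]
        have h4 : (0:ℝ) ≤ ((Nat.sqrt n + 1 : ℕ):ℝ) := Nat.cast_nonneg _
        nlinarith
      have hbR : (0:ℝ) ≤ (b:ℝ) := by exact_mod_cast hbpos.le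
      obtain ⟨hl, hr⟩ := abs_le_of_sq_le_sq' hsq2 hbR
      constructor
      · exact_mod_cast (by push_cast at hl ⊢; linarith : -(b:ℝ) ≤ (x:ℝ))
      · exact_mod_cast hr
    have h1 := hxa (Sf ω).1 (by simp only [hf]; nlinarith [sq_nonneg ((((Sf ω).2 : ℤ)):ℝ)])
    have h2 := hxa (Sf ω).2 (by simp only [hf]; nlinarith [sq_nonneg ((((Sf ω).1 : ℤ)):ℝ)])
    simp only [Set.mem_preimage, Finset.coe_product, Set.mem_prod, Finset.mem_coe,
      Finset.mem_Icc]
    exact ⟨⟨h1.1, h1.2⟩, ⟨h2.1, h2.2⟩⟩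
  have hmono : (μ {x | ε ≤ f x}ᶜ).toReal
      ≤ ((μ.map Sf) ↑((Finset.Icc (-b) b) ×ˢ (Finset.Icc (-b) b))).toReal := by
    rw [Measure.map_apply hSm ((Set.to_countable _).measurableSet)]
    exact ENNReal.toReal_mono (measure_ne_top μ _) (measure_mono hsub)
  exact le_trans hcompl hmono

end ProbReturnAux

set_option maxHeartbeats 1000000 in
open ProbReturnAux in
/-- For an i.i.d. symmetric square integrable ℤ²-valued sequence, there are C > 0
and N such that P[S_{2n} = 0] ≥ C / n for all n ≥ N. -/
theorem prob_return_ge_const_div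
    {Ω : Type*} [MeasurableSpace Ω] (μ : Measure Ω) [IsProbabilityMeasure μ]
    (X : ℕ → Ω → ℤ × ℤ)
    (hmeas : ∀ n, Measurable (X n))
    (hindep : iIndepFun X μ)
    (hident : ∀ n, IdentDistrib (X n) (X 0) μ μ)
    (hsq : Integrable (fun ω => ((X 0 ω).1 : ℝ) ^ 2 + ((X 0 ω).2 : ℝ) ^ 2) μ)
    (hsymm : Measure.map (X 0) μ = Measure.map (fun ω => -(X 0 ω)) μ)
    (S : ℕ → Ω → ℤ × ℤ)
    (hS : ∀ n ω, S n ω = ∑ k ∈ Finset.range n, X k ω) :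
    ∃ C : ℝ, 0 < C ∧ ∃ N : ℕ, ∀ n : ℕ, N ≤ n →
      ENNReal.ofReal (C / n) ≤ μ {ω | S (2 * n) ω = 0} := by
  classical
  set m : ℝ := ∫ ω, (((X 0 ω).1 : ℝ)^2 + ((X 0 ω).2 : ℝ)^2) ∂μ with hm
  have hm0 : 0 ≤ m := integral_nonneg (fun ω => by positivity)
  set a : ℕ := ⌈2 * m + 1⌉₊ with ha
  have ha1 : 1 ≤ a := Nat.one_le_iff_ne_zero.mpr (by positivity)
  refine ⟨1 / (144 * (a:ℝ)^2), by positivity, 1, ?_⟩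
  intro n hn
  haveI hν : IsProbabilityMeasure (μ.map (X 0)) :=
    Measure.isProbabilityMeasure_map (hmeas 0).aemeasurable
  set ν : Measure G := μ.map (X 0) with hνdef
  set ρ : Measure G := convPow ν n with hρ
  set b : ℤ := (a : ℤ) * (Nat.sqrt n + 1) with hb
  have hbpos : 0 < b := by positivity
  set B : Finset G := (Finset.Icc (-b) b) ×ˢ (Finset.Icc (-b) b) with hB
  set p : G → ℝ := fun x => (ρ {x}).toReal with hp
  -- step 1: the box has probability at least 1/2 under the law of S_n
  have hlaw : μ.map (fun ω => ∑ k ∈ Finset.range n, X k ω) = ρ := by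
    rw [map_sum_eq hmeas hindep hident, Finset.card_range]
  have hhalf : (1:ℝ)/2 ≤ (ρ ↑B).toReal := by
    have := half_le_prob_box hmeas hindep hident hsq hsymm n hn
    rwa [hlaw] at this
  -- step 2: measure of box as a sum of point masses
  have hpoint : ρ ↑B = ∑ x ∈ B, ρ {x} := by
    have hcoe : (↑B : Set G) = ⋃ x ∈ B, ({x} : Set G) := by
      ext y; simp
    rw [hcoe, measure_biUnion_finset ?_ (fun x _ => (Set.to_countable _).measurableSet)]
    intro x _ y _ hxy
    simp [Function.onFun, Set.disjoint_singleton, hxy]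
  have hsum_half : (1:ℝ)/2 ≤ ∑ x ∈ B, p x := by
    have : (ρ ↑B).toReal = ∑ x ∈ B, p x := by
      rw [hpoint, ENNReal.toReal_sum (fun x _ => measure_ne_top ρ _)]
    linarith [hhalf, this.symm.le, this.le]
  -- step 3: cardinality bound for the box
  have hcard : ((B.card : ℝ)) ≤ 36 * (a:ℝ)^2 * n := by
    have hcardB : B.card = ((2*b+1).toNat) * ((2*b+1).toNat) := by
      rw [hB, Finset.card_product, Int.card_Icc]
      congr 1 <;> · congr 1; ring
    have hcast2 : (((2*b+1).toNat : ℕ) : ℝ) = 2*(b:ℝ)+1 := by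
      have h := Int.toNat_of_nonneg (show (0:ℤ) ≤ 2*b+1 by omega)
      exact_mod_cast congrArg (fun z : ℤ => (z : ℝ)) h
    have hs1 : (1:ℝ) ≤ ((Nat.sqrt n : ℕ):ℝ) := by
      exact_mod_cast Nat.one_le_iff_ne_zero.mpr (Nat.sqrt_pos.mpr (by omega)).ne'
    have hs2 : ((Nat.sqrt n : ℕ):ℝ)^2 ≤ (n:ℝ) := by exact_mod_cast Nat.sqrt_le' n
    have haR : (1:ℝ) ≤ (a:ℝ) := by exact_mod_cast ha1
    have hbR : (b:ℝ) = (a:ℝ) * ((Nat.sqrt n : ℝ) + 1) := by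
      rw [hb]; push_cast; ring
    have hsp : ((Nat.sqrt n:ℝ)+1)^2 ≤ 4*(n:ℝ) := by nlinarith [hs1, hs2]
    have ht1 : 1 ≤ (a:ℝ)*((Nat.sqrt n:ℝ)+1) := by nlinarith [haR, hs1]
    have h9 : 9*(a:ℝ)^2*((Nat.sqrt n:ℝ)+1)^2 ≤ 36*(a:ℝ)^2*n := by
      have h := mul_le_mul_of_nonneg_left hsp (show (0:ℝ) ≤ 9*(a:ℝ)^2 by positivity)
      nlinarith [h]
    have hlhs : (2*((a:ℝ)*((Nat.sqrt n:ℝ)+1))+1)^2 ≤ 9*((a:ℝ)*((Nat.sqrt n:ℝ)+1))^2 := by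
      have h5 : (0:ℝ) ≤ ((a:ℝ)*((Nat.sqrt n:ℝ)+1)-1)*(5*((a:ℝ)*((Nat.sqrt n:ℝ)+1))+1) :=
        mul_nonneg (by linarith) (by linarith)
      nlinarith [h5]
    rw [hcardB]
    push_cast
    rw [hcast2, hbR]
    nlinarith [h9, hlhs]
  -- step 4: Cauchy-Schwarz
  have hQ0 : 0 ≤ ∑ x ∈ B, p x ^ 2 := Finset.sum_nonneg (fun x _ => sq_nonneg _)
  have hcs : ((1:ℝ)/2)^2 ≤ (B.card : ℝ) * ∑ x ∈ B, p x ^ 2 := by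
    refine le_trans ?_ (sq_sum_le_card_mul_sum_sq (s := B) (f := p))
    have h0 : (0:ℝ) ≤ ∑ x ∈ B, p x :=
      Finset.sum_nonneg (fun x _ => ENNReal.toReal_nonneg)
    nlinarith [hsum_half]
  have hfinal : 1 / (144 * (a:ℝ)^2) / n ≤ ∑ x ∈ B, p x ^ 2 := by
    have h1 : ((1:ℝ)/2)^2 ≤ (36 * (a:ℝ)^2 * n) * ∑ x ∈ B, p x ^ 2 :=
      le_trans hcs (mul_le_mul_of_nonneg_right hcard hQ0)
    have haR : (1:ℝ) ≤ (a:ℝ) := by exact_mod_cast ha1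
    have hnR : (1:ℝ) ≤ (n:ℝ) := by exact_mod_cast hn
    have h144 : (0:ℝ) < 144 * (a:ℝ)^2 * n := by positivity
    rw [div_div, div_le_iff₀ h144]
    nlinarith [h1]
  -- step 5: the return probability identity and conclusion
  have hset : {ω | S (2*n) ω = 0} = {ω | (∑ k ∈ Finset.range (2*n), X k ω) = 0} := by
    ext ω; simp [hS]
  rw [hset, prob_return_eq hmeas hindep hident hsymm n]
  calc ENNReal.ofReal (1 / (144 * (a:ℝ)^2) / n)
      ≤ ENNReal.ofReal (∑ x ∈ B, p x ^ 2) := ENNReal.ofReal_le_ofReal hfinal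
    _ = ∑ x ∈ B, ρ {x} * ρ {x} := by
        rw [ENNReal.ofReal_sum_of_nonneg (fun x _ => sq_nonneg _)]
        refine Finset.sum_congr rfl (fun x _ => ?_)
        rw [sq, ENNReal.ofReal_mul ENNReal.toReal_nonneg, hp,
          ENNReal.ofReal_toReal (measure_ne_top ρ _)]
    _ ≤ ∑' x : G, ρ {x} * ρ {x} := ENNReal.sum_le_tsum B
end
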